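/- Let π ∈ S_{m,n} and (X,Y) ∈ E_π. Then: (i) XY is lower triangular and YX is upper triangular; (ii) (YX)_{jj} = (XY)_{ii} whenever j = π(i), and (YX)_{jj} = 0 for every j not in the image of π; (iii) for all 1 ≤ i ≤ m and 1 ≤ j ≤ n, the rank of the upper-left submatrix (X_{i'j'})_{i'≤i, j'≤j} is at most #{i' ≤ i : π(i') ≤ j}; (iv) for all 1 ≤ i ≤ m and 1 ≤ j ≤ n, the rank of the lower-right submatrix (Y_{j'i'})_{j' > n−j, i' > m−i} is at most #{i' > m−i : π(i') > n−j}. Moreover (ii'): if ρ ∈ S_{m,n} and ρ(i) ≠ j = π(i) for some i, then there exists a point (X,Y) ∈ E_ρ with (YX)_{jj} ≠ (XY)_{ii}. -/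

import Mathlib

open Matrix

/-- The ambient space `Mat(m,n,ℂ) × Mat(n,m,ℂ)`. -/
abbrev LUSpace (m n : ℕ) := Matrix (Fin m) (Fin n) ℂ × Matrix (Fin n) (Fin m) ℂ

/-- Lower triangular square matrix. -/
def LowerTri {k : ℕ} (M : Matrix (Fin k) (Fin k) ℂ) : Prop := ∀ i j : Fin k, i < j → M i j = 0

/-- Upper triangular square matrix. -/
def UpperTri {k : ℕ} (M : Matrix (Fin k) (Fin k) ℂ) : Prop := ∀ i j : Fin k, j < i → M i j = 0

/-- The lower-upper scheme `E`. -/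
def LU (m n : ℕ) : Set (LUSpace m n) :=
  { p | LowerTri (p.1 * p.2) ∧ UpperTri (p.2 * p.1) }

/-- The partial permutation matrix associated to `π ∈ S_{m,n}`. -/
def permMat {m n : ℕ} (π : Fin m ↪ Fin n) : Matrix (Fin m) (Fin n) ℂ :=
  fun i j => if π i = j then 1 else 0

/-- Invertible lower triangular m×m matrices. -/
def Bminus (m : ℕ) : Set (Matrix (Fin m) (Fin m) ℂ) := { b | IsUnit b ∧ LowerTri b }

/-- Invertible upper triangular n×n matrices. -/
def Bplus (n : ℕ) : Set (Matrix (Fin n) (Fin n) ℂ) := { c | IsUnit c ∧ UpperTri c }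

/-- Lower unitriangular m×m matrices. -/
def Nminus (m : ℕ) : Set (Matrix (Fin m) (Fin m) ℂ) := { b | LowerTri b ∧ ∀ i, b i i = 1 }

/-- Upper unitriangular n×n matrices. -/
def Nplus (n : ℕ) : Set (Matrix (Fin n) (Fin n) ℂ) := { c | UpperTri c ∧ ∀ j, c j j = 1 }

/-- `E°_π`. -/
def Eopen {m n : ℕ} (π : Fin m ↪ Fin n) : Set (LUSpace m n) :=
  { p | ∃ b ∈ Nminus m, ∃ c ∈ Nplus n, ∃ s t : Fin m → ℂ,
      (∀ i, s i * t i ≠ 0) ∧ (∀ i i' : Fin m, i ≠ i' → s i * t i ≠ s i' * t i') ∧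
      p.1 = b * (Matrix.diagonal s * permMat π) * c⁻¹ ∧
      p.2 = c * ((permMat π)ᵀ * Matrix.diagonal t) * b⁻¹ }

/-- Coordinates of a point of `LUSpace` as a function on the variable-index type. -/
def coordsOf {m n : ℕ} (p : LUSpace m n) : (Fin m × Fin n) ⊕ (Fin n × Fin m) → ℂ
  | .inl ij => p.1 ij.1 ij.2
  | .inr ji => p.2 ji.1 ji.2

/-- Zariski closure of a subset of `LUSpace m n`: the common zero set of all polynomials
vanishing identically on the subset. -/
def zclosure {m n : ℕ} (S : Set (LUSpace m n)) : Set (LUSpace m n) :=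
  { p | ∀ f : MvPolynomial ((Fin m × Fin n) ⊕ (Fin n × Fin m)) ℂ,
      (∀ q ∈ S, MvPolynomial.eval (coordsOf q) f = 0) → MvPolynomial.eval (coordsOf p) f = 0 }

/-- `E_π`, the Zariski closure of `E°_π`. -/
def Ecomp {m n : ℕ} (π : Fin m ↪ Fin n) : Set (LUSpace m n) := zclosure (Eopen π)

/-- Zariski closure in the matrix space `Mat(m,n,ℂ)`. -/
def mzclosure {m n : ℕ} (S : Set (Matrix (Fin m) (Fin n) ℂ)) : Set (Matrix (Fin m) (Fin n) ℂ) :=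
  { X | ∀ f : MvPolynomial (Fin m × Fin n) ℂ,
      (∀ Y ∈ S, MvPolynomial.eval (fun ij => Y ij.1 ij.2) f = 0) →
        MvPolynomial.eval (fun ij => X ij.1 ij.2) f = 0 }

section AuxRank

lemma rank_le_card_support {a b : ℕ} (M : Matrix (Fin a) (Fin b) ℂ) (S : Finset (Fin a))
    (h : ∀ i ∉ S, M i = 0) : M.rank ≤ S.card := by
  rw [Matrix.rank_eq_finrank_span_row]
  have h1 : Set.range M ⊆
      insert 0 ((S.image (fun i => M i) : Finset (Fin b → ℂ)) : Set (Fin b → ℂ)) := by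
    rintro v ⟨i, rfl⟩
    by_cases hi : i ∈ S
    · exact Set.mem_insert_of_mem _ (by simpa using ⟨i, hi, rfl⟩)
    · simp [h i hi]
  calc Module.finrank ℂ (Submodule.span ℂ (Set.range M))
      ≤ Module.finrank ℂ (Submodule.span ℂ (insert 0
          ((S.image (fun i => M i) : Finset (Fin b → ℂ)) : Set (Fin b → ℂ)))) :=
        Submodule.finrank_mono (Submodule.span_mono h1)
    _ = Module.finrank ℂ (Submodule.span ℂ
          ((S.image (fun i => M i) : Finset (Fin b → ℂ)) : Set (Fin b → ℂ))) := by
        rw [Submodule.span_insert_zero]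
    _ ≤ (S.image (fun i => M i)).card := finrank_span_finset_le_card _
    _ ≤ S.card := Finset.card_image_le

lemma submatrix_rank_le {a b k l : ℕ} (M : Matrix (Fin a) (Fin b) ℂ) (f : Fin k → Fin a)
    (g : Fin l → Fin b) : (M.submatrix f g).rank ≤ M.rank := by
  have hfac : M.submatrix f g =
      (Matrix.of fun (x : Fin k) (j : Fin a) => if f x = j then (1:ℂ) else 0) * M *
      (Matrix.of fun (j : Fin b) (y : Fin l) => if j = g y then (1:ℂ) else 0) := by
    ext x y
    simp [Matrix.mul_apply, Finset.sum_ite_eq, Finset.sum_ite_eq', ite_mul, mul_ite]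
  rw [hfac]
  exact le_trans (Matrix.rank_mul_le_left _ _) (Matrix.rank_mul_le_right _ _)

lemma det_eq_zero_of_rank_lt {k : ℕ} (Q : Matrix (Fin k) (Fin k) ℂ) (h : Q.rank < k) :
    Q.det = 0 := by
  by_contra hd
  have : IsUnit Q := (Matrix.isUnit_iff_isUnit_det Q).mpr (isUnit_iff_ne_zero.mpr hd)
  rw [Matrix.rank_of_isUnit Q this, Fintype.card_fin] at h
  exact lt_irrefl _ h

lemma exists_indep_rows {a b k : ℕ} (M : Matrix (Fin a) (Fin b) ℂ) (hk : k ≤ M.rank) :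
    ∃ f : Fin k → Fin a, LinearIndependent ℂ (fun x => M (f x)) := by
  obtain ⟨s, hsub, hspan, hind⟩ := exists_linearIndependent ℂ (Set.range M)
  have hfin : s.Finite := (Set.finite_range M).subset hsub
  have := hfin.fintype
  have hcard : k ≤ Fintype.card s := by
    have h1 : k ≤ s.toFinset.card := by
      rw [← finrank_span_set_eq_card hind, hspan]
      rw [Matrix.rank_eq_finrank_span_row] at hk
      exact hk
    simpa [Set.toFinset_card] using h1
  obtain ⟨e⟩ := Function.Embedding.nonempty_of_card_le (by simpa using hcard :
    Fintype.card (Fin k) ≤ Fintype.card s)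
  choose g hg using fun v : s => hsub v.2
  refine ⟨fun x => g (e x), ?_⟩
  have hfun : (fun x => M (g (e x))) = (fun x => ((e x : s) : Fin b → ℂ)) := by
    funext x; exact hg (e x)
  rw [hfun]
  exact hind.comp e e.injective

lemma rank_le_of_minors {a b r : ℕ} (M : Matrix (Fin a) (Fin b) ℂ)
    (h : ∀ (f : Fin (r + 1) → Fin a) (g : Fin (r + 1) → Fin b),
      (M.submatrix f g).det = 0) : M.rank ≤ r := by
  by_contra hr
  push_neg at hr
  obtain ⟨f, hf⟩ := exists_indep_rows M hr
  have hN : LinearIndependent ℂ (fun x => (M.submatrix f id) x) := hf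
  have hrankN : (M.submatrix f id).rank = r + 1 := by
    exact (by simpa [Fintype.card_fin] using hN.rank_matrix :
      (Matrix.of fun i j => M (f i) j).rank = r + 1)
  have hrankNT : ((M.submatrix f id)ᵀ).rank = r + 1 := by
    rw [Matrix.rank_transpose]; exact hrankN
  obtain ⟨g, hg⟩ := exists_indep_rows ((M.submatrix f id)ᵀ) hrankNT.ge
  have hQ : LinearIndependent ℂ (fun y => ((M.submatrix f g)ᵀ) y) := hg
  have : IsUnit ((M.submatrix f g)ᵀ) := Matrix.linearIndependent_rows_iff_isUnit.mp hQ
  have hdet : IsUnit (M.submatrix f g).det := by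
    have := (Matrix.isUnit_iff_isUnit_det _).mp this
    rwa [Matrix.det_transpose] at this
  rw [h f g] at hdet
  exact (not_isUnit_zero : ¬ IsUnit (0:ℂ)) hdet

lemma sum_restrict_emb {α : Type*} [Fintype α] {M : ℕ} (e : α ↪ Fin M) (F : Fin M → ℂ)
    (h : ∀ k, (∀ x, e x ≠ k) → F k = 0) : ∑ k, F k = ∑ x, F (e x) := by
  have h1 : ∑ x : α, F (e x) = ∑ k ∈ Finset.univ.map e, F k := (Finset.sum_map _ e F).symm
  rw [h1]; symm
  apply Finset.sum_subset (Finset.subset_univ _)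
  intro k _ hk
  exact h k fun x hx => hk (Finset.mem_map.mpr ⟨x, Finset.mem_univ _, hx⟩)

lemma sum_restrict_lo {M a : ℕ} (ha : a ≤ M) (F : Fin M → ℂ)
    (h : ∀ k : Fin M, a ≤ (k : ℕ) → F k = 0) :
    ∑ k, F k = ∑ k : Fin a, F ⟨k.1, lt_of_lt_of_le k.isLt ha⟩ := by
  apply sum_restrict_emb ⟨fun k : Fin a => (⟨k.1, lt_of_lt_of_le k.isLt ha⟩ : Fin M),
    fun x y hxy => by simpa [Fin.ext_iff] using hxy⟩
  intro k hk
  apply h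
  by_contra hlt
  push_neg at hlt
  exact hk ⟨k.1, hlt⟩ (by apply Fin.ext; rfl)

lemma sum_restrict_hi {M a : ℕ} (ha : a ≤ M) (F : Fin M → ℂ)
    (h : ∀ k : Fin M, (k : ℕ) < M - a → F k = 0) :
    ∑ k, F k = ∑ k : Fin a, F ⟨M - a + k.1, by have := k.isLt; omega⟩ := by
  apply sum_restrict_emb ⟨fun k : Fin a => (⟨M - a + k.1, by have := k.isLt; omega⟩ : Fin M),
    fun x y hxy => by simp only [Fin.ext_iff] at hxy ⊢; omega⟩
  intro k hk
  apply h
  by_contra hge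
  push_neg at hge
  refine hk ⟨k.1 - (M - a), by omega⟩ ?_
  apply Fin.ext
  show M - a + (k.1 - (M - a)) = k.1
  omega

end AuxRank
section AuxTri

lemma lowerTri_iff {k : ℕ} (M : Matrix (Fin k) (Fin k) ℂ) :
    LowerTri M ↔ M.BlockTriangular (OrderDual.toDual : Fin k → (Fin k)ᵒᵈ) :=
  ⟨fun h i j hij => h i j hij, fun h i j hij => h hij⟩

lemma upperTri_iff {k : ℕ} (M : Matrix (Fin k) (Fin k) ℂ) :
    UpperTri M ↔ M.BlockTriangular (id : Fin k → Fin k) :=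
  ⟨fun h i j hij => h i j hij, fun h i j hij => h hij⟩

lemma Nminus.isUnitDet {m : ℕ} {b : Matrix (Fin m) (Fin m) ℂ} (hb : b ∈ Nminus m) :
    IsUnit b.det := by
  rw [Matrix.det_of_lowerTriangular b ((lowerTri_iff b).mp hb.1)]
  simp [hb.2]

lemma Nplus.isUnitDet {n : ℕ} {c : Matrix (Fin n) (Fin n) ℂ} (hc : c ∈ Nplus n) :
    IsUnit c.det := by
  rw [Matrix.det_of_upperTriangular ((upperTri_iff c).mp hc.1)]
  simp [hc.2]

lemma Nminus.inv_mem {m : ℕ} {b : Matrix (Fin m) (Fin m) ℂ} (hb : b ∈ Nminus m) :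
    b⁻¹ ∈ Nminus m := by
  have hinv : Invertible b := b.invertibleOfIsUnitDet (Nminus.isUnitDet hb)
  have hlow : LowerTri b⁻¹ := by
    rw [lowerTri_iff]
    exact Matrix.blockTriangular_inv_of_blockTriangular ((lowerTri_iff b).mp hb.1)
  refine ⟨hlow, fun i => ?_⟩
  have h1 : (b * b⁻¹) i i = 1 := by
    rw [Matrix.mul_nonsing_inv b (Nminus.isUnitDet hb)]; simp
  rw [Matrix.mul_apply] at h1
  rw [Finset.sum_eq_single i] at h1
  · rw [hb.2 i, one_mul] at h1; exact h1
  · intro k _ hk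
    rcases lt_or_gt_of_ne hk with h | h
    · rw [hlow k i h, mul_zero]
    · rw [hb.1 i k h, zero_mul]
  · intro h; exact absurd (Finset.mem_univ i) h

lemma Nplus.inv_mem {n : ℕ} {c : Matrix (Fin n) (Fin n) ℂ} (hc : c ∈ Nplus n) :
    c⁻¹ ∈ Nplus n := by
  have hinv : Invertible c := c.invertibleOfIsUnitDet (Nplus.isUnitDet hc)
  have hup : UpperTri c⁻¹ := by
    rw [upperTri_iff]
    exact Matrix.blockTriangular_inv_of_blockTriangular ((upperTri_iff c).mp hc.1)
  refine ⟨hup, fun i => ?_⟩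
  have h1 : (c * c⁻¹) i i = 1 := by
    rw [Matrix.mul_nonsing_inv c (Nplus.isUnitDet hc)]; simp
  rw [Matrix.mul_apply] at h1
  rw [Finset.sum_eq_single i] at h1
  · rw [hc.2 i, one_mul] at h1; exact h1
  · intro k _ hk
    rcases lt_or_gt_of_ne hk with h | h
    · rw [hc.1 i k h, zero_mul]
    · rw [hup k i h, mul_zero]
  · intro h; exact absurd (Finset.mem_univ i) h

lemma LowerTri.mul {k : ℕ} {A B : Matrix (Fin k) (Fin k) ℂ} (hA : LowerTri A)
    (hB : LowerTri B) : LowerTri (A * B) := by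
  rw [lowerTri_iff] at *
  exact hA.mul hB

lemma UpperTri.mul {k : ℕ} {A B : Matrix (Fin k) (Fin k) ℂ} (hA : UpperTri A)
    (hB : UpperTri B) : UpperTri (A * B) := by
  rw [upperTri_iff] at *
  exact hA.mul hB

lemma triple_diag {N : ℕ} (A M B : Matrix (Fin N) (Fin N) ℂ) (i : Fin N)
    (hAi : A i i = 1) (hBi : B i i = 1) (hM : ∀ k l, k ≠ l → M k l = 0)
    (hAB : ∀ k, k ≠ i → A i k = 0 ∨ B k i = 0) : (A * M * B) i i = M i i := by
  rw [Matrix.mul_apply]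
  have hAM : ∀ l, (A * M) i l = A i l * M l l := by
    intro l
    rw [Matrix.mul_apply, Finset.sum_eq_single l]
    · intro k _ hk; rw [hM k l hk, mul_zero]
    · intro h; exact absurd (Finset.mem_univ l) h
  rw [Finset.sum_eq_single i]
  · rw [hAM i, hAi, hBi, one_mul, mul_one]
  · intro l _ hl
    rw [hAM l]
    rcases hAB l hl with h | h
    · rw [h, zero_mul, zero_mul]
    · rw [h, mul_zero]
  · intro h; exact absurd (Finset.mem_univ i) h

end AuxTri

section AuxPerm

variable {m n : ℕ} (π : Fin m ↪ Fin n)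

lemma permMat_mul_transpose : permMat π * (permMat π)ᵀ = 1 := by
  ext i i'
  rw [Matrix.mul_apply]
  simp only [permMat, Matrix.transpose_apply]
  rw [Finset.sum_eq_single (π i)]
  · by_cases h : i = i'
    · simp [h, Matrix.one_apply]
    · have : π i' ≠ π i := fun hc => h (π.injective hc).symm
      simp [this, Matrix.one_apply, h]
  · intro k _ hk
    simp [if_neg (Ne.symm hk)]
  · intro h; exact absurd (Finset.mem_univ (π i)) h

lemma G_offdiag (u : Fin m → ℂ) {j j' : Fin n} (h : j ≠ j') :
    ((permMat π)ᵀ * Matrix.diagonal u * permMat π) j j' = 0 := by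
  rw [Matrix.mul_apply]
  apply Finset.sum_eq_zero
  intro k _
  rw [Matrix.mul_apply]
  by_cases hk : π k = j'
  · rw [Finset.sum_eq_zero]
    · exact zero_mul _
    intro l _
    simp only [Matrix.transpose_apply, permMat, Matrix.diagonal_apply]
    by_cases hl : π l = j
    · have : l ≠ k := fun hc => h (by rw [← hl, hc, hk])
      simp [this]
    · simp [hl]
  · simp [permMat, hk]

lemma G_diag_mem (u : Fin m → ℂ) (i : Fin m) :
    ((permMat π)ᵀ * Matrix.diagonal u * permMat π) (π i) (π i) = u i := by
  rw [Matrix.mul_apply, Finset.sum_eq_single i]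
  · rw [Matrix.mul_apply, Finset.sum_eq_single i]
    · simp [permMat, Matrix.diagonal_apply]
    · intro l _ hl
      simp [Matrix.diagonal_apply, hl]
    · intro h; exact absurd (Finset.mem_univ i) h
  · intro k _ hk
    have : π k ≠ π i := fun hc => hk (π.injective hc)
    simp [permMat, this]
  · intro h; exact absurd (Finset.mem_univ i) h

lemma G_diag_notmem (u : Fin m → ℂ) {j : Fin n} (h : ∀ i, π i ≠ j) :
    ((permMat π)ᵀ * Matrix.diagonal u * permMat π) j j = 0 := by
  rw [Matrix.mul_apply]
  apply Finset.sum_eq_zero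
  intro k _
  simp [permMat, h k]

lemma XY_eq {b : Matrix (Fin m) (Fin m) ℂ} {c : Matrix (Fin n) (Fin n) ℂ}
    (hc : IsUnit c.det) (s t : Fin m → ℂ) :
    (b * (Matrix.diagonal s * permMat π) * c⁻¹) * (c * ((permMat π)ᵀ * Matrix.diagonal t) * b⁻¹) =
      b * Matrix.diagonal (fun i => s i * t i) * b⁻¹ := by
  have h1 : ∀ Z : Matrix (Fin n) (Fin m) ℂ, c⁻¹ * (c * Z) = Z := fun Z =>
    Matrix.nonsing_inv_mul_cancel_left c Z hc
  simp only [Matrix.mul_assoc]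
  rw [h1, ← Matrix.mul_assoc (permMat π) (permMat π)ᵀ, permMat_mul_transpose, Matrix.one_mul,
    ← Matrix.mul_assoc (Matrix.diagonal s) (Matrix.diagonal t), Matrix.diagonal_mul_diagonal]

lemma YX_eq {b : Matrix (Fin m) (Fin m) ℂ} {c : Matrix (Fin n) (Fin n) ℂ}
    (hb : IsUnit b.det) (s t : Fin m → ℂ) :
    (c * ((permMat π)ᵀ * Matrix.diagonal t) * b⁻¹) * (b * (Matrix.diagonal s * permMat π) * c⁻¹) =
      c * ((permMat π)ᵀ * Matrix.diagonal (fun i => s i * t i) * permMat π) * c⁻¹ := by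
  have h1 : ∀ Z : Matrix (Fin m) (Fin n) ℂ, b⁻¹ * (b * Z) = Z := fun Z =>
    Matrix.nonsing_inv_mul_cancel_left b Z hb
  have h2 : (fun i => t i * s i) = fun i => s i * t i := funext fun i => mul_comm _ _
  simp only [Matrix.mul_assoc]
  rw [h1, ← Matrix.mul_assoc (Matrix.diagonal t) (Matrix.diagonal s),
    Matrix.diagonal_mul_diagonal, h2]

end AuxPerm

section AuxCorner

lemma corner_lo {m n a b : ℕ} (ha : a ≤ m) (hb : b ≤ n)
    (A : Matrix (Fin m) (Fin m) ℂ) (hA : LowerTri A) (M : Matrix (Fin m) (Fin n) ℂ)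
    (C : Matrix (Fin n) (Fin n) ℂ) (hC : UpperTri C) :
    (Matrix.of fun (x : Fin a) (y : Fin b) =>
        (A * M * C) ⟨x.1, lt_of_lt_of_le x.isLt ha⟩ ⟨y.1, lt_of_lt_of_le y.isLt hb⟩) =
      (Matrix.of fun (x x' : Fin a) =>
          A ⟨x.1, lt_of_lt_of_le x.isLt ha⟩ ⟨x'.1, lt_of_lt_of_le x'.isLt ha⟩) *
      (Matrix.of fun (x : Fin a) (y : Fin b) =>
          M ⟨x.1, lt_of_lt_of_le x.isLt ha⟩ ⟨y.1, lt_of_lt_of_le y.isLt hb⟩) *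
      (Matrix.of fun (y y' : Fin b) =>
          C ⟨y.1, lt_of_lt_of_le y.isLt hb⟩ ⟨y'.1, lt_of_lt_of_le y'.isLt hb⟩) := by
  ext x y
  set i : Fin m := ⟨x.1, lt_of_lt_of_le x.isLt ha⟩
  set j : Fin n := ⟨y.1, lt_of_lt_of_le y.isLt hb⟩
  show (A * M * C) i j = _
  rw [Matrix.mul_apply]
  rw [sum_restrict_lo hb (fun l => (A * M) i l * C l j) (fun l hl => by
    show (A * M) i l * C l j = 0
    rw [hC l j (show (y.1:ℕ) < (l:ℕ) by have := y.isLt; omega), mul_zero])]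
  have hin : ∀ l : Fin n, (A * M) i l = ∑ k : Fin a,
      A i ⟨k.1, lt_of_lt_of_le k.isLt ha⟩ * M ⟨k.1, lt_of_lt_of_le k.isLt ha⟩ l := by
    intro l
    rw [Matrix.mul_apply]
    exact sum_restrict_lo ha (fun k => A i k * M k l) (fun k hk => by
      show A i k * M k l = 0
      rw [hA i k (show (x.1:ℕ) < (k:ℕ) by have := x.isLt; omega), zero_mul])
  simp only [hin]
  rw [Matrix.mul_apply]
  apply Finset.sum_congr rfl
  intro y' _
  rw [Matrix.mul_apply]
  rfl

lemma hi_lt_aux {N c : ℕ} (hc : c ≤ N) (y : Fin c) : N - c + y.1 < N := by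
  have := y.isLt; omega

lemma corner_hi {m n a b : ℕ} (ha : a ≤ m) (hb : b ≤ n)
    (C : Matrix (Fin n) (Fin n) ℂ) (hC : UpperTri C) (M : Matrix (Fin n) (Fin m) ℂ)
    (B : Matrix (Fin m) (Fin m) ℂ) (hB : LowerTri B) :
    (Matrix.of fun (y : Fin b) (x : Fin a) =>
        (C * M * B) ⟨n - b + y.1, hi_lt_aux (by omega) y⟩
          ⟨m - a + x.1, hi_lt_aux (by omega) x⟩) =
      (Matrix.of fun (y y' : Fin b) =>
          C ⟨n - b + y.1, hi_lt_aux (by omega) y⟩ ⟨n - b + y'.1, hi_lt_aux (by omega) y'⟩) *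
      (Matrix.of fun (y : Fin b) (x : Fin a) =>
          M ⟨n - b + y.1, hi_lt_aux (by omega) y⟩ ⟨m - a + x.1, hi_lt_aux (by omega) x⟩) *
      (Matrix.of fun (x x' : Fin a) =>
          B ⟨m - a + x.1, hi_lt_aux (by omega) x⟩ ⟨m - a + x'.1, hi_lt_aux (by omega) x'⟩) := by
  ext y x
  set j : Fin n := ⟨n - b + y.1, hi_lt_aux (by omega) y⟩
  set i : Fin m := ⟨m - a + x.1, hi_lt_aux (by omega) x⟩
  show (C * M * B) j i = _
  rw [Matrix.mul_apply]
  rw [sum_restrict_hi ha (fun k => (C * M) j k * B k i) (fun k hk => by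
    show (C * M) j k * B k i = 0
    rw [hB k i (by show (k:ℕ) < m - a + x.1; omega), mul_zero])]
  have hin : ∀ k : Fin m, (C * M) j k = ∑ l : Fin b,
      C j ⟨n - b + l.1, hi_lt_aux (by omega) l⟩ * M ⟨n - b + l.1, hi_lt_aux (by omega) l⟩ k := by
    intro k
    rw [Matrix.mul_apply]
    exact sum_restrict_hi hb (fun l => C j l * M l k) (fun l hl => by
      show C j l * M l k = 0
      rw [hC j l (by show (l:ℕ) < n - b + y.1; omega), zero_mul])
  simp only [hin]
  rw [Matrix.mul_apply]
  apply Finset.sum_congr rfl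
  intro x' _
  rw [Matrix.mul_apply]
  rfl

end AuxCorner
section AuxEopen

lemma Eopen_subset_Ecomp {m n : ℕ} (π : Fin m ↪ Fin n) : Eopen π ⊆ Ecomp π :=
  fun q hq f hf => hf q hq

lemma eval_XY {m n : ℕ} (q : LUSpace m n) (i i' : Fin m) :
    MvPolynomial.eval (coordsOf q)
      (∑ k : Fin n, MvPolynomial.X (Sum.inl (i, k)) * MvPolynomial.X (Sum.inr (k, i'))) =
      (q.1 * q.2) i i' := by
  rw [map_sum, Matrix.mul_apply]
  apply Finset.sum_congr rfl
  intro k _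
  rw [_root_.map_mul, MvPolynomial.eval_X, MvPolynomial.eval_X]
  rfl

lemma eval_YX {m n : ℕ} (q : LUSpace m n) (j j' : Fin n) :
    MvPolynomial.eval (coordsOf q)
      (∑ k : Fin m, MvPolynomial.X (Sum.inr (j, k)) * MvPolynomial.X (Sum.inl (k, j'))) =
      (q.2 * q.1) j j' := by
  rw [map_sum, Matrix.mul_apply]
  apply Finset.sum_congr rfl
  intro k _
  rw [_root_.map_mul, MvPolynomial.eval_X, MvPolynomial.eval_X]
  rfl

lemma eopen_facts {m n : ℕ} (π : Fin m ↪ Fin n) {q : LUSpace m n} (hq : q ∈ Eopen π) :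
    (LowerTri (q.1 * q.2) ∧ UpperTri (q.2 * q.1)) ∧
    (∀ i, (q.2 * q.1) (π i) (π i) = (q.1 * q.2) i i) ∧
    (∀ j, (∀ i, π i ≠ j) → (q.2 * q.1) j j = 0) ∧
    (∀ a b : ℕ, 1 ≤ a → ∀ ha : a ≤ m, ∀ hb : b ≤ n,
      (Matrix.of fun (x : Fin a) (y : Fin b) =>
          q.1 ⟨x.1, lt_of_lt_of_le x.isLt ha⟩ ⟨y.1, lt_of_lt_of_le y.isLt hb⟩).rank ≤
        (Finset.univ.filter
          (fun x : Fin a => ((π ⟨x.1, lt_of_lt_of_le x.isLt ha⟩ : Fin n) : ℕ) < b)).card) ∧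
    (∀ a b : ℕ, 1 ≤ a → ∀ ha : a ≤ m, ∀ hb : b ≤ n,
      (Matrix.of fun (y : Fin b) (x : Fin a) =>
          q.2 ⟨n - b + y.1, hi_lt_aux (by omega) y⟩
            ⟨m - a + x.1, hi_lt_aux (by omega) x⟩).rank ≤
        (Finset.univ.filter
          (fun x : Fin a =>
            n - b ≤ ((π ⟨m - a + x.1, hi_lt_aux (by omega) x⟩ : Fin n) : ℕ))).card) := by
  obtain ⟨b, hb, c, hc, s, t, hst0, hstd, hq1, hq2⟩ := hq
  set u : Fin m → ℂ := fun i => s i * t i with hu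
  have hbinv := Nminus.inv_mem hb
  have hcinv := Nplus.inv_mem hc
  have hXY : q.1 * q.2 = b * Matrix.diagonal u * b⁻¹ := by
    rw [hq1, hq2]; exact XY_eq π (Nplus.isUnitDet hc) s t
  have hYX : q.2 * q.1 =
      c * ((permMat π)ᵀ * Matrix.diagonal u * permMat π) * c⁻¹ := by
    rw [hq1, hq2]; exact YX_eq π (Nminus.isUnitDet hb) s t
  have hdiagL : LowerTri (Matrix.diagonal u) :=
    fun i j hij => Matrix.diagonal_apply_ne u (ne_of_lt hij)
  have hGU : UpperTri ((permMat π)ᵀ * Matrix.diagonal u * permMat π) :=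
    fun i j hij => G_offdiag π u (ne_of_gt hij)
  refine ⟨⟨?_, ?_⟩, ?_, ?_, ?_, ?_⟩
  · rw [hXY]; exact LowerTri.mul (LowerTri.mul hb.1 hdiagL) hbinv.1
  · rw [hYX]; exact UpperTri.mul (UpperTri.mul hc.1 hGU) hcinv.1
  · intro i
    rw [hXY, hYX]
    rw [triple_diag b (Matrix.diagonal u) b⁻¹ i (hb.2 i) (hbinv.2 i)
      (fun k l hkl => Matrix.diagonal_apply_ne u hkl)
      (fun k hk => by
        rcases lt_or_gt_of_ne hk with h | h
        · exact Or.inr (hbinv.1 k i h)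
        · exact Or.inl (hb.1 i k h))]
    rw [triple_diag c ((permMat π)ᵀ * Matrix.diagonal u * permMat π) c⁻¹ (π i)
      (hc.2 (π i)) (hcinv.2 (π i))
      (fun k l hkl => G_offdiag π u hkl)
      (fun k hk => by
        rcases lt_or_gt_of_ne hk with h | h
        · exact Or.inl (hc.1 (π i) k h)
        · exact Or.inr (hcinv.1 k (π i) h))]
    rw [G_diag_mem π u i, Matrix.diagonal_apply_eq]
  · intro j hj
    rw [hYX]
    rw [triple_diag c ((permMat π)ᵀ * Matrix.diagonal u * permMat π) c⁻¹ j
      (hc.2 j) (hcinv.2 j)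
      (fun k l hkl => G_offdiag π u hkl)
      (fun k hk => by
        rcases lt_or_gt_of_ne hk with h | h
        · exact Or.inl (hc.1 j k h)
        · exact Or.inr (hcinv.1 k j h))]
    exact G_diag_notmem π u hj
  · -- rank bound (iii) on Eopen
    intro a bb _ ha hbn
    rw [hq1, corner_lo ha hbn b hb.1 (Matrix.diagonal s * permMat π) c⁻¹ hcinv.1]
    refine le_trans (Matrix.rank_mul_le_left _ _) (le_trans (Matrix.rank_mul_le_right _ _) ?_)
    apply rank_le_card_support
    intro x hx
    rw [Finset.mem_filter] at hx
    push_neg at hx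
    have hge : bb ≤ ((π ⟨x.1, lt_of_lt_of_le x.isLt ha⟩ : Fin n) : ℕ) :=
      hx (Finset.mem_univ x)
    funext y
    show (Matrix.diagonal s * permMat π) _ _ = 0
    rw [Matrix.diagonal_mul]
    have : π ⟨x.1, lt_of_lt_of_le x.isLt ha⟩ ≠ ⟨y.1, lt_of_lt_of_le y.isLt hbn⟩ := by
      intro hcon
      have := congrArg Fin.val hcon
      simp only at this
      have := y.isLt
      omega
    simp [permMat, this]
  · -- rank bound (iv) on Eopen
    intro a bb ha1 ha hbn
    rw [hq2, corner_hi ha hbn c hc.1 ((permMat π)ᵀ * Matrix.diagonal t) b⁻¹ hbinv.1]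
    refine le_trans (Matrix.rank_mul_le_left _ _) (le_trans (Matrix.rank_mul_le_right _ _) ?_)
    set S : Finset (Fin bb) := Finset.univ.filter
      (fun y : Fin bb => ∃ x : Fin a,
        π ⟨m - a + x.1, hi_lt_aux (by omega) x⟩ = ⟨n - bb + y.1, hi_lt_aux (by omega) y⟩)
      with hS
    refine le_trans (rank_le_card_support _ S ?_) ?_
    · intro y hy
      rw [hS, Finset.mem_filter] at hy
      push_neg at hy
      have hne := hy (Finset.mem_univ y)
      funext x
      show ((permMat π)ᵀ * Matrix.diagonal t) _ _ = 0
      rw [Matrix.mul_diagonal]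
      have : π ⟨m - a + x.1, hi_lt_aux (by omega) x⟩ ≠
          ⟨n - bb + y.1, hi_lt_aux (by omega) y⟩ := hne x
      simp [permMat, Matrix.transpose_apply, this]
    · -- card S ≤ card filter
      classical
      have hmap : ∀ y ∈ S, ∃ x : Fin a,
          π ⟨m - a + x.1, hi_lt_aux (by omega) x⟩ = ⟨n - bb + y.1, hi_lt_aux (by omega) y⟩ :=
        fun y hy => (Finset.mem_filter.mp hy).2
      set F : Fin bb → Fin a := fun y =>
        if h : ∃ x : Fin a,
            π ⟨m - a + x.1, hi_lt_aux (by omega) x⟩ = ⟨n - bb + y.1, hi_lt_aux (by omega) y⟩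
        then h.choose else ⟨0, ha1⟩ with hF
      apply Finset.card_le_card_of_injOn F
      · intro y hy
        have h := hmap y hy
        rw [Finset.mem_coe, Finset.mem_filter]
        refine ⟨Finset.mem_univ _, ?_⟩
        rw [hF]
        simp only [dif_pos h]
        have hspec := h.choose_spec
        rw [hspec]
        show n - bb ≤ n - bb + y.1
        omega
      · intro y hy y' hy' hFF
        have h := hmap y hy
        have h' := hmap y' hy'
        have hs := h.choose_spec
        have hs' := h'.choose_spec
        rw [hF] at hFF
        simp only [dif_pos h, dif_pos h'] at hFF
        rw [hFF] at hs
        rw [hs] at hs'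
        have := congrArg Fin.val hs'
        simp only at this
        apply Fin.ext
        omega

end AuxEopen
lemma eval_detX {m n k : ℕ} (q : LUSpace m n) (idx : Fin k → Fin k → Fin m × Fin n) :
    MvPolynomial.eval (coordsOf q)
      (Matrix.det (Matrix.of fun u v => MvPolynomial.X (Sum.inl (idx u v)))) =
      Matrix.det (Matrix.of fun u v => q.1 (idx u v).1 (idx u v).2) := by
  rw [RingHom.map_det]
  congr 1
  ext u v
  simp [Matrix.map_apply, coordsOf]

lemma eval_detY {m n k : ℕ} (q : LUSpace m n) (idx : Fin k → Fin k → Fin n × Fin m) :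
    MvPolynomial.eval (coordsOf q)
      (Matrix.det (Matrix.of fun u v => MvPolynomial.X (Sum.inr (idx u v)))) =
      Matrix.det (Matrix.of fun u v => q.2 (idx u v).1 (idx u v).2) := by
  rw [RingHom.map_det]
  congr 1
  ext u v
  simp [Matrix.map_apply, coordsOf]

/-- Equations satisfied on `E_π`: triangularity (i), the flux equations (ii), rank conditions
on upper-left submatrices of `X` (iii) and lower-right submatrices of `Y` (iv); and (ii')
the failure of wrong flux equations on other components. -/
theorem equations_on_Epi (m n : ℕ) (hm : 1 ≤ m) (hmn : m ≤ n) (π : Fin m ↪ Fin n) :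
    (∀ p ∈ Ecomp π,
      -- (i)
      (LowerTri (p.1 * p.2) ∧ UpperTri (p.2 * p.1)) ∧
      -- (ii)
      ((∀ i : Fin m, (p.2 * p.1) (π i) (π i) = (p.1 * p.2) i i) ∧
       (∀ j : Fin n, (∀ i : Fin m, π i ≠ j) → (p.2 * p.1) j j = 0)) ∧
      -- (iii)
      (∀ a b : ℕ, ∀ ha1 : 1 ≤ a, ∀ ha : a ≤ m, ∀ hb1 : 1 ≤ b, ∀ hb : b ≤ n,
        Matrix.rank (Matrix.of fun (x : Fin a) (y : Fin b) =>
            p.1 ⟨x.1, lt_of_lt_of_le x.isLt ha⟩ ⟨y.1, lt_of_lt_of_le y.isLt hb⟩) ≤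
          (Finset.univ.filter
            (fun x : Fin a => ((π ⟨x.1, lt_of_lt_of_le x.isLt ha⟩ : Fin n) : ℕ) < b)).card) ∧
      -- (iv)
      (∀ a b : ℕ, ∀ ha1 : 1 ≤ a, ∀ ha : a ≤ m, ∀ hb1 : 1 ≤ b, ∀ hb : b ≤ n,
        Matrix.rank (Matrix.of fun (y : Fin b) (x : Fin a) =>
            p.2 ⟨n - b + y.1, by have := y.isLt; omega⟩ ⟨m - a + x.1, by have := x.isLt; omega⟩) ≤
          (Finset.univ.filter
            (fun x : Fin a =>
              n - b ≤ ((π ⟨m - a + x.1, by have := x.isLt; omega⟩ : Fin n) : ℕ))).card)) ∧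
    -- (ii')
    (∀ ρ : Fin m ↪ Fin n, ∀ i : Fin m, ρ i ≠ π i →
      ∃ p ∈ Ecomp ρ, (p.2 * p.1) (π i) (π i) ≠ (p.1 * p.2) i i) := by
  constructor
  · intro p hp
    refine ⟨⟨?_, ?_⟩, ⟨?_, ?_⟩, ?_, ?_⟩
    · -- LowerTri (p.1 * p.2)
      intro i j hij
      have := hp
        (∑ k : Fin n, MvPolynomial.X (Sum.inl (i, k)) * MvPolynomial.X (Sum.inr (k, j)))
        (fun q hq => by rw [eval_XY]; exact (eopen_facts π hq).1.1 i j hij)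
      rwa [eval_XY] at this
    · -- UpperTri (p.2 * p.1)
      intro j j' hij
      have := hp
        (∑ k : Fin m, MvPolynomial.X (Sum.inr (j, k)) * MvPolynomial.X (Sum.inl (k, j')))
        (fun q hq => by rw [eval_YX]; exact (eopen_facts π hq).1.2 j j' hij)
      rwa [eval_YX] at this
    · -- flux equations
      intro i
      have := hp
        ((∑ k : Fin m, MvPolynomial.X (Sum.inr (π i, k)) * MvPolynomial.X (Sum.inl (k, π i))) -
          (∑ k : Fin n, MvPolynomial.X (Sum.inl (i, k)) * MvPolynomial.X (Sum.inr (k, i))))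
        (fun q hq => by
          rw [map_sub, eval_YX, eval_XY, (eopen_facts π hq).2.1 i, sub_self])
      rw [map_sub, eval_YX, eval_XY] at this
      exact sub_eq_zero.mp this
    · -- vanishing diagonal
      intro j hj
      have := hp
        (∑ k : Fin m, MvPolynomial.X (Sum.inr (j, k)) * MvPolynomial.X (Sum.inl (k, j)))
        (fun q hq => by rw [eval_YX]; exact (eopen_facts π hq).2.2.1 j hj)
      rwa [eval_YX] at this
    · -- (iii)
      intro a b ha1 ha hb1 hb
      set r := (Finset.univ.filter
        (fun x : Fin a => ((π ⟨x.1, lt_of_lt_of_le x.isLt ha⟩ : Fin n) : ℕ) < b)).card with hr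
      apply rank_le_of_minors
      intro f g
      have key := hp
        (Matrix.det (Matrix.of fun u v : Fin (r + 1) =>
          MvPolynomial.X (Sum.inl
            (⟨(f u).1, lt_of_lt_of_le (f u).isLt ha⟩, ⟨(g v).1, lt_of_lt_of_le (g v).isLt hb⟩))))
        (fun q hq => by
          rw [eval_detX q (fun u v =>
            (⟨(f u).1, lt_of_lt_of_le (f u).isLt ha⟩, ⟨(g v).1, lt_of_lt_of_le (g v).isLt hb⟩))]
          apply det_eq_zero_of_rank_lt
          have hsub : (Matrix.of fun u v : Fin (r + 1) =>
              q.1 ⟨(f u).1, lt_of_lt_of_le (f u).isLt ha⟩ ⟨(g v).1, lt_of_lt_of_le (g v).isLt hb⟩) =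
              (Matrix.of fun (x : Fin a) (y : Fin b) =>
                q.1 ⟨x.1, lt_of_lt_of_le x.isLt ha⟩ ⟨y.1, lt_of_lt_of_le y.isLt hb⟩).submatrix f g :=
            rfl
          rw [hsub]
          have h1 := submatrix_rank_le (Matrix.of fun (x : Fin a) (y : Fin b) =>
            q.1 ⟨x.1, lt_of_lt_of_le x.isLt ha⟩ ⟨y.1, lt_of_lt_of_le y.isLt hb⟩) f g
          have h2 := (eopen_facts π hq).2.2.2.1 a b ha1 ha hb
          omega)
      rw [eval_detX p (fun u v =>
        (⟨(f u).1, lt_of_lt_of_le (f u).isLt ha⟩, ⟨(g v).1, lt_of_lt_of_le (g v).isLt hb⟩))] at key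
      exact key
    · -- (iv)
      intro a b ha1 ha hb1 hb
      set r := (Finset.univ.filter
        (fun x : Fin a =>
          n - b ≤ ((π ⟨m - a + x.1, by have := x.isLt; omega⟩ : Fin n) : ℕ))).card with hr
      apply rank_le_of_minors
      intro f g
      have key := hp
        (Matrix.det (Matrix.of fun u v : Fin (r + 1) =>
          MvPolynomial.X (Sum.inr
            (⟨n - b + (f u).1, by have := (f u).isLt; omega⟩,
             ⟨m - a + (g v).1, by have := (g v).isLt; omega⟩))))
        (fun q hq => by
          rw [eval_detY q (fun u v =>
            (⟨n - b + (f u).1, by have := (f u).isLt; omega⟩,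
             ⟨m - a + (g v).1, by have := (g v).isLt; omega⟩))]
          apply det_eq_zero_of_rank_lt
          have hsub : (Matrix.of fun u v : Fin (r + 1) =>
              q.2 ⟨n - b + (f u).1, by have := (f u).isLt; omega⟩
                ⟨m - a + (g v).1, by have := (g v).isLt; omega⟩) =
              (Matrix.of fun (y : Fin b) (x : Fin a) =>
                q.2 ⟨n - b + y.1, by have := y.isLt; omega⟩
                  ⟨m - a + x.1, by have := x.isLt; omega⟩).submatrix f g := rfl
          rw [hsub]
          have h1 := submatrix_rank_le (Matrix.of fun (y : Fin b) (x : Fin a) =>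
            q.2 ⟨n - b + y.1, by have := y.isLt; omega⟩
              ⟨m - a + x.1, by have := x.isLt; omega⟩) f g
          have h2 := (eopen_facts π hq).2.2.2.2 a b ha1 ha hb
          omega)
      rw [eval_detY p (fun u v =>
        (⟨n - b + (f u).1, by have := (f u).isLt; omega⟩,
         ⟨m - a + (g v).1, by have := (g v).isLt; omega⟩))] at key
      exact key
  · -- (ii')
    intro ρ i hρ
    set s : Fin m → ℂ := fun k => ((k : ℕ) : ℂ) + 1 with hs
    set t : Fin m → ℂ := fun _ => 1 with ht
    set u : Fin m → ℂ := fun k => s k * t k with hu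
    have hone_m : (1 : Matrix (Fin m) (Fin m) ℂ) ∈ Nminus m :=
      ⟨fun i j hij => Matrix.one_apply_ne (ne_of_lt hij), fun i => Matrix.one_apply_eq i⟩
    have hone_n : (1 : Matrix (Fin n) (Fin n) ℂ) ∈ Nplus n :=
      ⟨fun i j hij => Matrix.one_apply_ne (ne_of_gt hij), fun i => Matrix.one_apply_eq i⟩
    have hsinj : ∀ k k' : Fin m, k ≠ k' → s k ≠ s k' := by
      intro k k' hkk hcon
      rw [hs] at hcon
      simp only [add_left_inj, Nat.cast_inj] at hcon
      exact hkk (Fin.ext hcon)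
    set q : LUSpace m n :=
      ((1 : Matrix (Fin m) (Fin m) ℂ) * (Matrix.diagonal s * permMat ρ) *
          (1 : Matrix (Fin n) (Fin n) ℂ)⁻¹,
        (1 : Matrix (Fin n) (Fin n) ℂ) * ((permMat ρ)ᵀ * Matrix.diagonal t) *
          (1 : Matrix (Fin m) (Fin m) ℂ)⁻¹) with hqdef
    have hq : q ∈ Eopen ρ := by
      refine ⟨1, hone_m, 1, hone_n, s, t, ?_, ?_, rfl, rfl⟩
      · intro k
        rw [ht, hs]
        simp only [mul_one]
        exact Nat.cast_add_one_ne_zero (k : ℕ)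
      · intro k k' hkk
        rw [ht]
        simp only [mul_one]
        exact hsinj k k' hkk
    have hu_ne : ∀ k, u k = s k := fun k => by rw [hu, ht]; simp
    have hXY : q.1 * q.2 = Matrix.diagonal u := by
      show (1 * (Matrix.diagonal s * permMat ρ) * (1 : Matrix (Fin n) (Fin n) ℂ)⁻¹) *
        (1 * ((permMat ρ)ᵀ * Matrix.diagonal t) * (1 : Matrix (Fin m) (Fin m) ℂ)⁻¹) = _
      rw [XY_eq ρ (by simp : IsUnit (1 : Matrix (Fin n) (Fin n) ℂ).det) s t]
      rw [(Matrix.inv_eq_left_inv (by simp) : (1 : Matrix (Fin m) (Fin m) ℂ)⁻¹ = 1),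
        Matrix.one_mul, Matrix.mul_one]
    have hYX : q.2 * q.1 = (permMat ρ)ᵀ * Matrix.diagonal u * permMat ρ := by
      show (1 * ((permMat ρ)ᵀ * Matrix.diagonal t) * (1 : Matrix (Fin m) (Fin m) ℂ)⁻¹) *
        (1 * (Matrix.diagonal s * permMat ρ) * (1 : Matrix (Fin n) (Fin n) ℂ)⁻¹) = _
      rw [YX_eq ρ (by simp : IsUnit (1 : Matrix (Fin m) (Fin m) ℂ).det) s t]
      rw [(Matrix.inv_eq_left_inv (by simp) : (1 : Matrix (Fin n) (Fin n) ℂ)⁻¹ = 1),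
        Matrix.one_mul, Matrix.mul_one]
    refine ⟨q, Eopen_subset_Ecomp ρ hq, ?_⟩
    rw [hXY, hYX, Matrix.diagonal_apply_eq]
    by_cases hex : ∃ k, ρ k = π i
    · obtain ⟨k, hk⟩ := hex
      have hki : k ≠ i := fun h => hρ (h ▸ hk)
      rw [← hk, G_diag_mem ρ u k]
      rw [hu_ne k, hu_ne i]
      exact hsinj k i hki
    · push_neg at hex
      rw [G_diag_notmem ρ u hex]
      rw [hu_ne i, hs]
      exact (Nat.cast_add_one_ne_zero (i : ℕ)).symm
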